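/- arXiv:1304.5153 — 2 statements merged into one kernel-verified Lean document; each statement's English description precedes it below -/
import Mathlib

section
/- Let λ₁, λ₂ > 0 and γ₁, γ₂ ≥ 0. There exist real numbers α₁ ≥ 1 and α₂ ≥ 1 satisfying α₁λ₁ - α₂γ₂ > 0 and α₂λ₂ - α₁γ₁ > 0 if and only if γ₁γ₂ < λ₁λ₂. -/
/-- Small-gain condition: existence of weights `α₁, α₂ ≥ 1` with
`α₁λ₁ > α₂γ₂` and `α₂λ₂ > α₁γ₁` iff `γ₁γ₂ < λ₁λ₂`. -/
theorem small_gain_iff (lam1 lam2 gam1 gam2 : ℝ)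
    (hlam1 : 0 < lam1) (hlam2 : 0 < lam2) (hgam1 : 0 ≤ gam1) (hgam2 : 0 ≤ gam2) :
    (∃ a1 a2 : ℝ, 1 ≤ a1 ∧ 1 ≤ a2 ∧ 0 < a1 * lam1 - a2 * gam2 ∧ 0 < a2 * lam2 - a1 * gam1)
      ↔ gam1 * gam2 < lam1 * lam2 := by
  constructor
  · rintro ⟨a1, a2, ha1, ha2, h1, h2⟩
    have ha1p : (0:ℝ) < a1 := lt_of_lt_of_le one_pos ha1
    have ha2p : (0:ℝ) < a2 := lt_of_lt_of_le one_pos ha2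
    have hprod : a2 * gam2 * (a1 * gam1) < a1 * lam1 * (a2 * lam2) := by
      apply mul_lt_mul' (le_of_lt (by linarith)) (by linarith)
        (by positivity) (by positivity)
    have hA : 0 < a1 * a2 := by positivity
    nlinarith [hA, hprod]
  · intro h
    set ε : ℝ := (lam1 * lam2 - gam1 * gam2) / (gam1 + 1) with hε
    have hεpos : 0 < ε := by
      apply div_pos (by linarith) (by linarith)
    have hεg : ε * gam1 < lam1 * lam2 - gam1 * gam2 := by
      rw [hε, div_mul_eq_mul_div, div_lt_iff₀ (by linarith : (0:ℝ) < gam1 + 1)]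
      nlinarith
    set t : ℝ := (gam2 + ε) / lam1 with ht
    have htpos : 0 < t := div_pos (by linarith) hlam1
    have ht1 : gam2 < t * lam1 := by
      rw [ht, div_mul_cancel₀ _ (ne_of_gt hlam1)]; linarith
    have ht2 : t * gam1 < lam2 := by
      rw [ht, div_mul_eq_mul_div, div_lt_iff₀ hlam1]
      nlinarith
    set a2 : ℝ := max 1 (1 / t) with ha2
    have ha2ge : 1 ≤ a2 := le_max_left _ _
    have ha2pos : 0 < a2 := lt_of_lt_of_le one_pos ha2ge
    refine ⟨t * a2, a2, ?_, ha2ge, ?_, ?_⟩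
    · have : 1 / t ≤ a2 := le_max_right _ _
      calc (1:ℝ) = t * (1 / t) := by field_simp
        _ ≤ t * a2 := by nlinarith
    · have : a2 * gam2 < a2 * (t * lam1) := by
        apply mul_lt_mul_of_pos_left ht1 ha2pos
      nlinarith
    · have : a2 * (t * gam1) < a2 * lam2 := mul_lt_mul_of_pos_left ht2 ha2pos
      nlinarith
end

section
/- Let V : ℝⁿ × ℝⁿ → ℝ≥0 be a bisimulation function for Σ with constants λ > 0, γ ≥ 0. Then for any trajectories x(t), x'(t) with bounded input difference δ = sup_{t≥0}‖u(t) - u'(t)‖, we have limsup_{t→∞} ‖x(t) - x'(t)‖ ≤ (γ/λ)δ. -/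
open Filter

/-- Asymptotic gain: if `V` is a bisimulation function (lower bound plus derivative
decay along the given pair of trajectories) and the input difference is bounded by
`δ = sup_{t ≥ 0} ‖u t - u' t‖`, then `limsup_{t→∞} ‖x t - x' t‖ ≤ (γ/λ) δ`. -/
theorem asymptotic_gain_bound (n m : ℕ)
    (V : EuclideanSpace ℝ (Fin n) → EuclideanSpace ℝ (Fin n) → ℝ)
    (lam gam : ℝ) (hlam : 0 < lam) (hgam : 0 ≤ gam)
    (hVnonneg : ∀ x x', 0 ≤ V x x')
    (hVlow : ∀ x x', ‖x - x'‖ ≤ V x x')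
    (x x' : ℝ → EuclideanSpace ℝ (Fin n))
    (u u' : ℝ → EuclideanSpace ℝ (Fin m))
    (D : ℝ → ℝ)
    (hD : ∀ t, HasDerivAt (fun s => V (x s) (x' s)) (D t) t)
    (hdecay : ∀ t, 0 ≤ t → D t ≤ -lam * V (x t) (x' t) + gam * ‖u t - u' t‖)
    (δ : ℝ) (hδ : IsLUB {r : ℝ | ∃ s : ℝ, 0 ≤ s ∧ r = ‖u s - u' s‖} δ) :
    limsup (fun t => ‖x t - x' t‖) atTop ≤ (gam / lam) * δ := by
  set W : ℝ → ℝ := fun t => V (x t) (x' t) with hW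
  set c : ℝ := gam / lam * δ with hc
  have hu : ∀ t, 0 ≤ t → ‖u t - u' t‖ ≤ δ := fun t ht => hδ.1 ⟨t, ht, rfl⟩
  -- auxiliary function g
  set g : ℝ → ℝ := fun t => (W t - c) * Real.exp (lam * t) with hg
  have hg' : ∀ t, HasDerivAt g ((D t + lam * W t - lam * c) * Real.exp (lam * t)) t := by
    intro t
    have h1 : HasDerivAt (fun s => W s - c) (D t) t := (hD t).sub_const c
    have h2 : HasDerivAt (fun s => Real.exp (lam * s)) (lam * Real.exp (lam * t)) t := by
      simpa [mul_comm, Function.comp_def] using (Real.hasDerivAt_exp (lam * t)).comp t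
        ((hasDerivAt_id t).const_mul lam)
    have := h1.mul h2
    convert this using 1
    all_goals first | rfl | ring
  have hanti : AntitoneOn g (Set.Ici (0 : ℝ)) := by
    apply antitoneOn_of_deriv_nonpos (convex_Ici 0)
    · exact (Differentiable.continuous (fun t => (hg' t).differentiableAt)).continuousOn
    · intro t ht
      exact ((hg' t).differentiableAt).differentiableWithinAt
    · intro t ht
      rw [interior_Ici] at ht
      rw [(hg' t).deriv]
      have ht0 : (0:ℝ) ≤ t := le_of_lt ht
      have h1 : D t + lam * W t - lam * c ≤ 0 := by
        have h2 := hdecay t ht0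
        have h3 : gam * ‖u t - u' t‖ ≤ gam * δ := mul_le_mul_of_nonneg_left (hu t ht0) hgam
        have h4 : lam * c = gam * δ := by
          rw [hc]; field_simp
        nlinarith
      exact mul_nonpos_of_nonpos_of_nonneg h1 (Real.exp_pos _).le
  have hbound : ∀ t, 0 ≤ t → W t ≤ c + (W 0 - c) * Real.exp (-(lam * t)) := by
    intro t ht
    have h1 : g t ≤ g 0 := hanti (Set.self_mem_Ici) ht ht
    have h2 : g 0 = W 0 - c := by simp [hg]
    have hep : (0:ℝ) < Real.exp (lam * t) := Real.exp_pos _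
    rw [h2, hg] at h1
    have := (div_le_div_iff_of_pos_right hep).mpr h1
    rw [mul_div_assoc, div_self hep.ne', mul_one] at this
    have hrw : (W 0 - c) / Real.exp (lam * t) = (W 0 - c) * Real.exp (-(lam * t)) := by
      rw [Real.exp_neg]; ring
    linarith [hrw ▸ this]
  -- the bounding function tends to c
  have htend : Tendsto (fun t => c + (W 0 - c) * Real.exp (-(lam * t))) atTop (nhds c) := by
    have hlt : Tendsto (fun t : ℝ => lam * t) atTop atTop :=
      Tendsto.const_mul_atTop hlam tendsto_id
    have h1 : Tendsto (fun t : ℝ => Real.exp (-(lam * t))) atTop (nhds 0) :=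
      Real.tendsto_exp_atBot.comp (tendsto_neg_atTop_atBot.comp hlt)
    have := ((h1.const_mul (W 0 - c)).const_add c)
    simpa using this
  have hev : ∀ᶠ t in atTop, ‖x t - x' t‖ ≤ c + (W 0 - c) * Real.exp (-(lam * t)) := by
    filter_upwards [eventually_ge_atTop (0:ℝ)] with t ht
    exact le_trans (hVlow _ _) (hbound t ht)
  calc limsup (fun t => ‖x t - x' t‖) atTop
      ≤ limsup (fun t => c + (W 0 - c) * Real.exp (-(lam * t))) atTop := by
        exact limsup_le_limsup hev
          (IsCoboundedUnder.of_frequently_ge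
            (Frequently.of_forall (fun t => norm_nonneg _)))
          htend.isBoundedUnder_le
    _ = c := htend.limsup_eq
end
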